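/- Let G(x,t,ξ,τ) be the one-dimensional heat kernel and let s, s₁ : [0,σ] → ℝ satisfy |s(t) − s₁(τ)| ≥ Λ > 0 for all 0 ≤ τ < t ≤ σ. Then for all t ∈ (0,σ], ∫₀ᵗ |∂G/∂x(s(t),t,s₁(τ),τ)| dτ ≤ π^{−1/2} ∫_{Λ/√(8σ)}^{∞} z^{−1} e^{−z²} dz. -/

import Mathlib

open Real MeasureTheory Set

lemma aux_w_exp (w : ℝ) (hw : 0 ≤ w) : w * Real.exp (-(w ^ 2 / 2)) ≤ 1 := by
  have h1 : w ≤ Real.exp (w ^ 2 / 2) := by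
    have h := Real.add_one_le_exp (w ^ 2 / 2)
    nlinarith [sq_nonneg (w - 1)]
  calc w * Real.exp (-(w ^ 2 / 2)) ≤ Real.exp (w ^ 2 / 2) * Real.exp (-(w ^ 2 / 2)) :=
        mul_le_mul_of_nonneg_right h1 (Real.exp_pos _).le
    _ = 1 := by rw [← Real.exp_add]; simp

lemma deriv_bound (c y r Λ : ℝ) (hr : 0 < r) (hΛ : 0 < Λ) (ha : Λ ≤ |y - c|) :
    |deriv (fun x => Real.exp (-(x - c) ^ 2 / (4 * r)) / Real.sqrt (4 * π * r)) y| ≤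
      (2 * Real.sqrt π)⁻¹ * (r⁻¹ * Real.exp (-Λ ^ 2 / (8 * r))) := by
  have hπ : 0 < π := Real.pi_pos
  have hsr : 0 < Real.sqrt r := Real.sqrt_pos.2 hr
  have hsπ : 0 < Real.sqrt π := Real.sqrt_pos.2 hπ
  have hd1 : HasDerivAt (fun x : ℝ => -(x - c) ^ 2 / (4 * r)) (-(2 * (y - c)) / (4 * r)) y := by
    have h := (((hasDerivAt_id y).sub_const c).pow 2).neg.div_const (4 * r)
    convert h using 1 <;> first | rfl | simp
  have hd2 := hd1.exp.div_const (Real.sqrt (4 * π * r))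
  rw [hd2.deriv]
  set A := |y - c| with hA
  have hA0 : 0 < A := lt_of_lt_of_le hΛ ha
  have hsqrt4 : Real.sqrt (4 * π * r) = 2 * Real.sqrt π * Real.sqrt r := by
    rw [Real.sqrt_mul (by positivity), Real.sqrt_mul (by norm_num : (0:ℝ) ≤ 4)]
    rw [show (4:ℝ) = 2 ^ 2 by norm_num, Real.sqrt_sq (by norm_num : (0:ℝ) ≤ 2)]
  have habs : |Real.exp (-(y - c) ^ 2 / (4 * r)) * (-(2 * (y - c)) / (4 * r)) /
      Real.sqrt (4 * π * r)| =
      Real.exp (-(A ^ 2 / (4 * r))) * (2 * A / (4 * r)) / (2 * Real.sqrt π * Real.sqrt r) := by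
    rw [abs_div, abs_mul, abs_div, abs_neg, abs_mul, abs_of_nonneg (Real.exp_pos _).le,
      abs_of_pos (by positivity : (0:ℝ) < 4 * r), abs_of_nonneg (Real.sqrt_nonneg _), abs_two,
      hsqrt4]
    congr 2
    rw [← sq_abs, ← hA]
    ring
  rw [habs]
  set E : ℝ := Real.exp (-(A ^ 2 / (8 * r))) with hE
  have hEpos : 0 < E := Real.exp_pos _
  have hsplit : Real.exp (-(A ^ 2 / (4 * r))) = E * E := by
    rw [hE, ← Real.exp_add]
    congr 1
    field_simp
    ring
  have hw := aux_w_exp (A / (2 * Real.sqrt r)) (by positivity)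
  have hw2 : (A / (2 * Real.sqrt r)) ^ 2 / 2 = A ^ 2 / (8 * r) := by
    rw [div_pow, mul_pow, Real.sq_sqrt hr.le]
    ring
  rw [hw2] at hw
  have hkey : Real.exp (-(A ^ 2 / (4 * r))) * (2 * A / (4 * r)) / (2 * Real.sqrt π * Real.sqrt r)
      = (2 * Real.sqrt π)⁻¹ * (r⁻¹ * E) * (A / (2 * Real.sqrt r) * E) := by
    rw [hsplit]
    have hrs : r = Real.sqrt r * Real.sqrt r := (Real.mul_self_sqrt hr.le).symm
    rw [hrs]
    field_simp
    ring
  rw [hkey]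
  calc (2 * Real.sqrt π)⁻¹ * (r⁻¹ * E) * (A / (2 * Real.sqrt r) * E)
      ≤ (2 * Real.sqrt π)⁻¹ * (r⁻¹ * E) * 1 :=
        mul_le_mul_of_nonneg_left hw (by positivity)
    _ = (2 * Real.sqrt π)⁻¹ * (r⁻¹ * E) := mul_one _
    _ ≤ (2 * Real.sqrt π)⁻¹ * (r⁻¹ * Real.exp (-Λ ^ 2 / (8 * r))) := by
        have hΛA : Λ ^ 2 ≤ A ^ 2 := by nlinarith
        have hEE : E ≤ Real.exp (-Λ ^ 2 / (8 * r)) := by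
          rw [hE, neg_div]
          exact Real.exp_le_exp.2 (neg_le_neg (by gcongr))
        exact mul_le_mul_of_nonneg_left (mul_le_mul_of_nonneg_left hEE (by positivity))
          (by positivity)

lemma tail_integrable (b : ℝ) (hb : 0 < b) :
    IntegrableOn (fun z => z⁻¹ * Real.exp (-z ^ 2)) (Ioi b) := by
  have h1 : IntegrableOn (fun z => b⁻¹ * Real.exp (-1 * z ^ 2)) (Ioi b) :=
    ((integrable_exp_neg_mul_sq one_pos).const_mul b⁻¹).integrableOn
  apply Integrable.mono h1
  · apply ContinuousOn.aestronglyMeasurable _ measurableSet_Ioi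
    apply ContinuousOn.mul
    · exact ContinuousOn.inv₀ continuousOn_id (fun z hz => ne_of_gt (hb.trans hz))
    · exact (Real.continuous_exp.comp (continuous_pow 2).neg).continuousOn
  · filter_upwards [ae_restrict_mem measurableSet_Ioi] with z hz
    have hz0 : (0:ℝ) < z := hb.trans hz
    have he : Real.exp (-1 * z ^ 2) = Real.exp (-z ^ 2) := by norm_num
    rw [Real.norm_eq_abs, Real.norm_eq_abs, he, abs_mul, abs_mul,
      abs_of_nonneg (Real.exp_pos _).le, abs_of_nonneg (inv_nonneg.2 hz0.le),
      abs_of_nonneg (inv_nonneg.2 hb.le)]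
    gcongr
    exact hz.le

lemma cov_lemma (σ Λ : ℝ) (hσ : 0 < σ) (hΛ : 0 < Λ) :
    (∫ r in Ioo (0:ℝ) σ, r⁻¹ * Real.exp (-Λ ^ 2 / (8 * r))) =
      2 * (∫ z in Ioi (Λ / Real.sqrt (8 * σ)), z⁻¹ * Real.exp (-z ^ 2)) ∧
    IntegrableOn (fun r => r⁻¹ * Real.exp (-Λ ^ 2 / (8 * r))) (Ioo (0:ℝ) σ) := by
  set b := Λ / Real.sqrt (8 * σ) with hbdef
  have hb : 0 < b := by positivity
  have hb2 : b ^ 2 = Λ ^ 2 / (8 * σ) := by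
    rw [hbdef, div_pow, Real.sq_sqrt (by positivity)]
  set f : ℝ → ℝ := fun z => Λ ^ 2 / (8 * z ^ 2) with hf
  set f' : ℝ → ℝ := fun z => -(Λ ^ 2 * 16 * z) / (8 * z ^ 2) ^ 2 with hf'def
  have hf' : ∀ z ∈ Ioi b, HasDerivWithinAt f (f' z) (Ioi b) z := by
    intro z hz
    have hz0 : (0:ℝ) < z := hb.trans hz
    have h := (hasDerivAt_const z (Λ ^ 2)).div ((hasDerivAt_pow 2 z).const_mul 8)
      (by positivity : (8 : ℝ) * z ^ 2 ≠ 0)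
    apply HasDerivAt.hasDerivWithinAt
    convert h using 1 <;> first | rfl | (simp [hf'def]; ring)
  have hinj : InjOn f (Ioi b) := by
    intro z1 h1 z2 h2 heq
    have hz1 : (0:ℝ) < z1 := hb.trans h1
    have hz2 : (0:ℝ) < z2 := hb.trans h2
    simp only [hf] at heq
    have hsq : z1 ^ 2 = z2 ^ 2 := by
      field_simp at heq
      nlinarith [heq]
    have h3 : (z1 - z2) * (z1 + z2) = 0 := by nlinarith
    rcases mul_eq_zero.1 h3 with h4 | h4
    · linarith
    · linarith
  have himg : f '' Ioi b = Ioo 0 σ := by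
    ext r
    constructor
    · rintro ⟨z, hz, rfl⟩
      have hz0 : (0:ℝ) < z := hb.trans hz
      have hbz : b ^ 2 < z ^ 2 := by
        have hbz' : b < z := hz
        exact pow_lt_pow_left₀ hbz' hb.le two_ne_zero
      constructor
      · positivity
      · rw [hf]
        rw [div_lt_iff₀ (by positivity)]
        rw [hb2] at hbz
        rw [div_lt_iff₀ (by positivity)] at hbz
        nlinarith
    · rintro ⟨hr0, hrσ⟩
      refine ⟨Λ / Real.sqrt (8 * r), ?_, ?_⟩
      · have hs : Real.sqrt (8 * r) < Real.sqrt (8 * σ) :=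
          Real.sqrt_lt_sqrt (by positivity) (by linarith)
        exact div_lt_div_of_pos_left hΛ (Real.sqrt_pos.2 (by positivity)) hs
      · simp only [hf]
        rw [div_pow, Real.sq_sqrt (by positivity)]
        field_simp
  have hcv := integral_image_eq_integral_abs_deriv_smul measurableSet_Ioi hf' hinj
    (fun r => r⁻¹ * Real.exp (-Λ ^ 2 / (8 * r)))
  rw [himg] at hcv
  have heq : ∀ z ∈ Ioi b, |f' z| • ((f z)⁻¹ * Real.exp (-Λ ^ 2 / (8 * f z)))
      = 2 * (z⁻¹ * Real.exp (-z ^ 2)) := by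
    intro z hz
    have hz0 : (0:ℝ) < z := hb.trans hz
    have hexp : -Λ ^ 2 / (8 * f z) = -z ^ 2 := by
      rw [hf]
      field_simp
    rw [hexp, smul_eq_mul, hf'def, hf]
    rw [abs_div, abs_neg, abs_of_nonneg (by positivity : (0:ℝ) ≤ Λ ^ 2 * 16 * z),
      abs_of_nonneg (by positivity : (0:ℝ) ≤ (8 * z ^ 2) ^ 2)]
    field_simp
    ring
  have hint : IntegrableOn (fun z => |f' z| • ((f z)⁻¹ * Real.exp (-Λ ^ 2 / (8 * f z)))) (Ioi b) := by
    apply IntegrableOn.congr_fun _ (fun z hz => (heq z hz).symm) measurableSet_Ioi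
    exact (tail_integrable b hb).const_mul 2
  constructor
  · rw [hcv, setIntegral_congr_fun measurableSet_Ioi heq, integral_const_mul]
  · rw [← himg]
    rw [integrableOn_image_iff_integrableOn_abs_deriv_smul measurableSet_Ioi hf' hinj]
    exact hint

theorem heat_kernel_separated_integral_bound (σ Λ : ℝ) (hσ : 0 < σ) (hΛ : 0 < Λ)
    (s s₁ : ℝ → ℝ)
    (hsep : ∀ τ t : ℝ, 0 ≤ τ → τ < t → t ≤ σ → Λ ≤ |s t - s₁ τ|) :
    ∀ t : ℝ, 0 < t → t ≤ σ →
      (∫ τ in (0:ℝ)..t,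
          |deriv (fun x => Real.exp (-(x - s₁ τ) ^ 2 / (4 * (t - τ))) /
              Real.sqrt (4 * π * (t - τ))) (s t)|)
        ≤ (Real.sqrt π)⁻¹ *
            ∫ z in Set.Ioi (Λ / Real.sqrt (8 * σ)), z⁻¹ * Real.exp (-z ^ 2) := by
  intro t ht htσ
  obtain ⟨hcov, hgi⟩ := cov_lemma σ Λ hσ hΛ
  set g : ℝ → ℝ := fun r => r⁻¹ * Real.exp (-Λ ^ 2 / (8 * r)) with hgdef
  set I : ℝ := ∫ z in Set.Ioi (Λ / Real.sqrt (8 * σ)), z⁻¹ * Real.exp (-z ^ 2) with hIdef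
  have hπ : 0 < π := Real.pi_pos
  have hsπ : 0 < Real.sqrt π := Real.sqrt_pos.2 hπ
  -- integrability of the reflected bound
  have hgiσ : IntervalIntegrable g volume 0 σ := by
    rw [intervalIntegrable_iff_integrableOn_Ioc_of_le hσ.le]
    exact hgi.congr_set_ae Ioo_ae_eq_Ioc.symm
  have hgit : IntervalIntegrable g volume 0 t :=
    hgiσ.mono_set (by rw [Set.uIcc_of_le ht.le, Set.uIcc_of_le hσ.le]
                      exact Set.Icc_subset_Icc le_rfl htσ)
  have hrefl : IntervalIntegrable (fun τ => g (t - τ)) volume 0 t := by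
    simpa using (hgit.comp_sub_left t).symm
  have hboundInt : IntegrableOn (fun τ => (2 * Real.sqrt π)⁻¹ * g (t - τ)) (Set.Ioc 0 t) :=
    ((intervalIntegrable_iff_integrableOn_Ioc_of_le ht.le).1 hrefl).const_mul _
  rw [intervalIntegral.integral_of_le ht.le]
  have hmono : (∫ τ in Set.Ioc (0:ℝ) t,
      |deriv (fun x => Real.exp (-(x - s₁ τ) ^ 2 / (4 * (t - τ))) /
          Real.sqrt (4 * π * (t - τ))) (s t)|)
      ≤ ∫ τ in Set.Ioc (0:ℝ) t, (2 * Real.sqrt π)⁻¹ * g (t - τ) := by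
    have hae : ∀ᵐ τ ∂(volume.restrict (Set.Ioc (0:ℝ) t)),
        ‖|deriv (fun x => Real.exp (-(x - s₁ τ) ^ 2 / (4 * (t - τ))) /
            Real.sqrt (4 * π * (t - τ))) (s t)|‖ ≤ (2 * Real.sqrt π)⁻¹ * g (t - τ) := by
      rw [← Measure.restrict_congr_set Ioo_ae_eq_Ioc]
      filter_upwards [ae_restrict_mem measurableSet_Ioo] with τ hτ
      rw [Real.norm_eq_abs, abs_abs]
      exact deriv_bound (s₁ τ) (s t) (t - τ) Λ (sub_pos.2 hτ.2) hΛ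
        (hsep τ t hτ.1.le hτ.2 htσ)
    calc (∫ τ in Set.Ioc (0:ℝ) t,
        |deriv (fun x => Real.exp (-(x - s₁ τ) ^ 2 / (4 * (t - τ))) /
            Real.sqrt (4 * π * (t - τ))) (s t)|)
        ≤ ‖∫ τ in Set.Ioc (0:ℝ) t,
            |deriv (fun x => Real.exp (-(x - s₁ τ) ^ 2 / (4 * (t - τ))) /
                Real.sqrt (4 * π * (t - τ))) (s t)|‖ := by
          rw [Real.norm_eq_abs]; exact le_abs_self _
      _ ≤ ∫ τ in Set.Ioc (0:ℝ) t, (2 * Real.sqrt π)⁻¹ * g (t - τ) :=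
          norm_integral_le_of_norm_le hboundInt hae
  have h3 : (∫ τ in Set.Ioc (0:ℝ) t, g (t - τ)) = ∫ r in Set.Ioc (0:ℝ) t, g r := by
    rw [← intervalIntegral.integral_of_le ht.le,
      intervalIntegral.integral_comp_sub_left g t]
    simp [intervalIntegral.integral_of_le ht.le]
  have h4 : (∫ r in Set.Ioc (0:ℝ) t, g r) ≤ ∫ r in Set.Ioo (0:ℝ) σ, g r := by
    apply setIntegral_mono_set hgi
    · filter_upwards [ae_restrict_mem measurableSet_Ioo] with r hr
      have : (0:ℝ) < r := hr.1
      positivity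
    · rw [ae_le_set]
      refine measure_mono_null ?_ (measure_singleton σ)
      rintro x ⟨⟨hx1, hx2⟩, hx3⟩
      simp only [Set.mem_Ioo, not_and, not_lt] at hx3
      have h5 : σ ≤ x := hx3 hx1
      have h6 : x ≤ σ := hx2.trans htσ
      simp [le_antisymm h6 h5]
  calc (∫ τ in Set.Ioc (0:ℝ) t,
      |deriv (fun x => Real.exp (-(x - s₁ τ) ^ 2 / (4 * (t - τ))) /
          Real.sqrt (4 * π * (t - τ))) (s t)|)
      ≤ ∫ τ in Set.Ioc (0:ℝ) t, (2 * Real.sqrt π)⁻¹ * g (t - τ) := hmono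
    _ = (2 * Real.sqrt π)⁻¹ * ∫ τ in Set.Ioc (0:ℝ) t, g (t - τ) := integral_const_mul _ _
    _ = (2 * Real.sqrt π)⁻¹ * ∫ r in Set.Ioc (0:ℝ) t, g r := by rw [h3]
    _ ≤ (2 * Real.sqrt π)⁻¹ * ∫ r in Set.Ioo (0:ℝ) σ, g r :=
        mul_le_mul_of_nonneg_left h4 (by positivity)
    _ = (2 * Real.sqrt π)⁻¹ * (2 * I) := by rw [hcov]
    _ = (Real.sqrt π)⁻¹ * I := by
        rw [← mul_assoc]
        congr 1
        field_simp
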